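/- The transformation t = x, u = y/(x(y²+z²)), v = −z/(x(y²+z²)) maps solutions of the system y″ − (2y/(y²+z²))y′² − (4z/(y²+z²))y′z′ + (2y/(y²+z²))z′² − (2/x)y′ − 2y/x² = 0, z″ + (2z/(y²+z²))y′² − (4y/(y²+z²))y′z′ − (2z/(y²+z²))z′² − (2/x)z′ − 2z/x² = 0 to solutions of u″ = 0 and v″ = 0; that is, if (y(x), z(x)) solves the nonlinear system on a domain where x ≠ 0 and y² + z² ≠ 0, then d²/dx²[y/(x(y²+z²))] = 0 and d²/dx²[−z/(x(y²+z²))] = 0. -/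

import Mathlib

open Set

set_option maxHeartbeats 3200000 in
/-- Auxiliary: the first component, stated generally. -/
theorem aux_linearize
    (y z : ℝ → ℝ) (p q : ℝ)
    (hy : Differentiable ℝ y) (hz : Differentiable ℝ z)
    (hy' : Differentiable ℝ (deriv y)) (hz' : Differentiable ℝ (deriv z))
    (hdom : ∀ x ∈ Set.Ioo p q, x ≠ 0 ∧ (y x) ^ 2 + (z x) ^ 2 ≠ 0)
    (hsys : ∀ x ∈ Set.Ioo p q,
      deriv (deriv y) x
        - (2 * y x / ((y x) ^ 2 + (z x) ^ 2)) * (deriv y x) ^ 2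
        - (4 * z x / ((y x) ^ 2 + (z x) ^ 2)) * deriv y x * deriv z x
        + (2 * y x / ((y x) ^ 2 + (z x) ^ 2)) * (deriv z x) ^ 2
        - (2 / x) * deriv y x - 2 * y x / x ^ 2 = 0)
    (hsys2 : ∀ x ∈ Set.Ioo p q,
      deriv (deriv z) x
        + (2 * z x / ((y x) ^ 2 + (z x) ^ 2)) * (deriv y x) ^ 2
        - (4 * y x / ((y x) ^ 2 + (z x) ^ 2)) * deriv y x * deriv z x
        - (2 * z x / ((y x) ^ 2 + (z x) ^ 2)) * (deriv z x) ^ 2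
        - (2 / x) * deriv z x - 2 * z x / x ^ 2 = 0) :
    ∀ x ∈ Set.Ioo p q,
      deriv (deriv (fun t => y t / (t * ((y t) ^ 2 + (z t) ^ 2)))) x = 0 := by
  -- the explicit first derivative
  set g : ℝ → ℝ := fun t =>
    (deriv y t * (t * ((y t) ^ 2 + (z t) ^ 2))
      - y t * (((y t) ^ 2 + (z t) ^ 2)
          + t * (2 * y t * deriv y t + 2 * z t * deriv z t)))
      / (t * ((y t) ^ 2 + (z t) ^ 2)) ^ 2 with hg
  have hW : ∀ b : ℝ, HasDerivAt (fun t => (y t) ^ 2 + (z t) ^ 2)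
      (2 * y b * deriv y b + 2 * z b * deriv z b) b := by
    intro b
    have h := (((hy b).hasDerivAt).pow 2).add (((hz b).hasDerivAt).pow 2)
    refine h.congr_deriv ?_
    push_cast
    ring
  have hD : ∀ b : ℝ, HasDerivAt (fun t => t * ((y t) ^ 2 + (z t) ^ 2))
      (((y b) ^ 2 + (z b) ^ 2) + b * (2 * y b * deriv y b + 2 * z b * deriv z b)) b := by
    intro b
    have h := (hasDerivAt_id b).mul (hW b)
    refine h.congr_deriv ?_
    simp only [id_eq]
    ring
  have hderiv_u : ∀ b ∈ Set.Ioo p q,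
      HasDerivAt (fun t => y t / (t * ((y t) ^ 2 + (z t) ^ 2))) (g b) b := by
    intro b hb
    obtain ⟨hb0, hwb⟩ := hdom b hb
    have hden : b * ((y b) ^ 2 + (z b) ^ 2) ≠ 0 := mul_ne_zero hb0 hwb
    exact ((hy b).hasDerivAt).div (hD b) hden
  intro a ha
  obtain ⟨ha0, hwa⟩ := hdom a ha
  have heq : deriv (fun t => y t / (t * ((y t) ^ 2 + (z t) ^ 2))) =ᶠ[nhds a] g :=
    Filter.eventuallyEq_of_mem (isOpen_Ioo.mem_nhds ha)
      (fun b hb => (hderiv_u b hb).deriv)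
  rw [heq.deriv_eq]
  -- now compute deriv g a
  have Hy : HasDerivAt y (deriv y a) a := (hy a).hasDerivAt
  have Hz : HasDerivAt z (deriv z a) a := (hz a).hasDerivAt
  have Hy' : HasDerivAt (deriv y) (deriv (deriv y) a) a := (hy' a).hasDerivAt
  have Hz' : HasDerivAt (deriv z) (deriv (deriv z) a) a := (hz' a).hasDerivAt
  have HW := hW a
  have HD := hD a
  have HW1 : HasDerivAt (fun t => 2 * y t * deriv y t + 2 * z t * deriv z t)
      ((2 * deriv y a * deriv y a + 2 * y a * deriv (deriv y) a)
        + (2 * deriv z a * deriv z a + 2 * z a * deriv (deriv z) a)) a := by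
    have h := ((Hy.const_mul 2).mul Hy').add ((Hz.const_mul 2).mul Hz')
    exact h
  have HD' : HasDerivAt (fun t => ((y t) ^ 2 + (z t) ^ 2)
      + t * (2 * y t * deriv y t + 2 * z t * deriv z t))
      ((2 * y a * deriv y a + 2 * z a * deriv z a)
        + ((2 * y a * deriv y a + 2 * z a * deriv z a)
          + a * ((2 * deriv y a * deriv y a + 2 * y a * deriv (deriv y) a)
            + (2 * deriv z a * deriv z a + 2 * z a * deriv (deriv z) a)))) a := by
    have h := HW.add ((hasDerivAt_id a).mul HW1)
    refine h.congr_deriv ?_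
    simp only [id_eq]
    ring
  have HN : HasDerivAt (fun t => deriv y t * (t * ((y t) ^ 2 + (z t) ^ 2))
      - y t * (((y t) ^ 2 + (z t) ^ 2)
          + t * (2 * y t * deriv y t + 2 * z t * deriv z t)))
      (deriv (deriv y) a * (a * ((y a) ^ 2 + (z a) ^ 2))
        + deriv y a * (((y a) ^ 2 + (z a) ^ 2)
            + a * (2 * y a * deriv y a + 2 * z a * deriv z a))
        - (deriv y a * (((y a) ^ 2 + (z a) ^ 2)
            + a * (2 * y a * deriv y a + 2 * z a * deriv z a))
          + y a * ((2 * y a * deriv y a + 2 * z a * deriv z a)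
            + ((2 * y a * deriv y a + 2 * z a * deriv z a)
              + a * ((2 * deriv y a * deriv y a + 2 * y a * deriv (deriv y) a)
                + (2 * deriv z a * deriv z a + 2 * z a * deriv (deriv z) a)))))) a :=
    (Hy'.mul HD).sub (Hy.mul HD')
  have hden : a * ((y a) ^ 2 + (z a) ^ 2) ≠ 0 := mul_ne_zero ha0 hwa
  have hden2 : (a * ((y a) ^ 2 + (z a) ^ 2)) ^ 2 ≠ 0 := pow_ne_zero 2 hden
  have HG : HasDerivAt g _ a := HN.div (HD.pow 2) hden2
  rw [HG.deriv]
  -- algebra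
  have h1 := hsys a ha
  have hy2 : deriv (deriv y) a =
      (2 * y a / ((y a) ^ 2 + (z a) ^ 2)) * (deriv y a) ^ 2
      + (4 * z a / ((y a) ^ 2 + (z a) ^ 2)) * deriv y a * deriv z a
      - (2 * y a / ((y a) ^ 2 + (z a) ^ 2)) * (deriv z a) ^ 2
      + (2 / a) * deriv y a + 2 * y a / a ^ 2 := by linarith
  have h2 := hsys2 a ha
  have hz2 : deriv (deriv z) a =
      - (2 * z a / ((y a) ^ 2 + (z a) ^ 2)) * (deriv y a) ^ 2
      + (4 * y a / ((y a) ^ 2 + (z a) ^ 2)) * deriv y a * deriv z a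
      + (2 * z a / ((y a) ^ 2 + (z a) ^ 2)) * (deriv z a) ^ 2
      + (2 / a) * deriv z a + 2 * z a / a ^ 2 := by linarith
  rw [hy2, hz2]
  rw [div_eq_zero_iff]
  left
  push_cast
  field_simp
  ring



/-- The transformation u = y/(x(y²+z²)), v = −z/(x(y²+z²)) maps solutions of the
given nonlinear system to solutions of u″ = 0, v″ = 0. -/
theorem example_one_linearization
    (y z : ℝ → ℝ) (p q : ℝ)
    (hy : Differentiable ℝ y) (hz : Differentiable ℝ z)
    (hy' : Differentiable ℝ (deriv y)) (hz' : Differentiable ℝ (deriv z))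
    (hdom : ∀ x ∈ Set.Ioo p q, x ≠ 0 ∧ (y x) ^ 2 + (z x) ^ 2 ≠ 0)
    (hsys : ∀ x ∈ Set.Ioo p q,
      deriv (deriv y) x
        - (2 * y x / ((y x) ^ 2 + (z x) ^ 2)) * (deriv y x) ^ 2
        - (4 * z x / ((y x) ^ 2 + (z x) ^ 2)) * deriv y x * deriv z x
        + (2 * y x / ((y x) ^ 2 + (z x) ^ 2)) * (deriv z x) ^ 2
        - (2 / x) * deriv y x - 2 * y x / x ^ 2 = 0 ∧
      deriv (deriv z) x
        + (2 * z x / ((y x) ^ 2 + (z x) ^ 2)) * (deriv y x) ^ 2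
        - (4 * y x / ((y x) ^ 2 + (z x) ^ 2)) * deriv y x * deriv z x
        - (2 * z x / ((y x) ^ 2 + (z x) ^ 2)) * (deriv z x) ^ 2
        - (2 / x) * deriv z x - 2 * z x / x ^ 2 = 0) :
    ∀ x ∈ Set.Ioo p q,
      deriv (deriv (fun t => y t / (t * ((y t) ^ 2 + (z t) ^ 2)))) x = 0 ∧
      deriv (deriv (fun t => - z t / (t * ((y t) ^ 2 + (z t) ^ 2)))) x = 0 := by
  intro x hx
  constructor
  · exact aux_linearize y z p q hy hz hy' hz' hdom
      (fun b hb => (hsys b hb).1) (fun b hb => (hsys b hb).2) x hx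
  · -- apply aux to (Y, Z) = (-z, y)
    have hdY : deriv (fun t => - z t) = fun t => - deriv z t := by
      funext t
      simp [deriv.neg]
    have hdY2 : deriv (deriv (fun t => - z t)) = fun t => - deriv (deriv z) t := by
      simp only [hdY]
      funext t
      simp [deriv.neg]
    have hdZ2 : deriv (fun t => - deriv z t) = fun t => - deriv (deriv z) t := by
      funext t
      simp [deriv.neg]
    have hY' : Differentiable ℝ (deriv (fun t => - z t)) := by
      rw [hdY]; exact hz'.neg
    have hdom' : ∀ b ∈ Set.Ioo p q, b ≠ 0 ∧ ((- z b)) ^ 2 + (y b) ^ 2 ≠ 0 := by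
      intro b hb
      obtain ⟨h1, h2⟩ := hdom b hb
      refine ⟨h1, ?_⟩
      intro h
      apply h2
      nlinarith [h]
    have hs1 : ∀ b ∈ Set.Ioo p q,
        deriv (deriv (fun t => - z t)) b
          - (2 * (- z b) / ((- z b) ^ 2 + (y b) ^ 2)) * (deriv (fun t => - z t) b) ^ 2
          - (4 * y b / ((- z b) ^ 2 + (y b) ^ 2)) * deriv (fun t => - z t) b * deriv y b
          + (2 * (- z b) / ((- z b) ^ 2 + (y b) ^ 2)) * (deriv y b) ^ 2
          - (2 / b) * deriv (fun t => - z t) b - 2 * (- z b) / b ^ 2 = 0 := by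
      intro b hb
      simp only [hdY2, hdY, hdZ2]
      have h2 := (hsys b hb).2
      have hw := (hdom b hb).2
      have hw' : (- z b) ^ 2 + (y b) ^ 2 = (y b) ^ 2 + (z b) ^ 2 := by ring
      rw [hw']
      linear_combination -h2
    have hs2 : ∀ b ∈ Set.Ioo p q,
        deriv (deriv y) b
          + (2 * y b / ((- z b) ^ 2 + (y b) ^ 2)) * (deriv (fun t => - z t) b) ^ 2
          - (4 * (- z b) / ((- z b) ^ 2 + (y b) ^ 2)) * deriv (fun t => - z t) b * deriv y b
          - (2 * y b / ((- z b) ^ 2 + (y b) ^ 2)) * (deriv y b) ^ 2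
          - (2 / b) * deriv y b - 2 * y b / b ^ 2 = 0 := by
      intro b hb
      simp only [hdY]
      have h1 := (hsys b hb).1
      have hw' : (- z b) ^ 2 + (y b) ^ 2 = (y b) ^ 2 + (z b) ^ 2 := by ring
      rw [hw']
      linear_combination h1
    have := aux_linearize (fun t => - z t) y p q hz.neg hy hY' hy' hdom' hs1 hs2 x hx
    have hfun : (fun t => (fun t => - z t) t / (t * (((fun t => - z t) t) ^ 2 + (y t) ^ 2)))
        = (fun t => - z t / (t * ((y t) ^ 2 + (z t) ^ 2))) := by
      funext t
      ring_nf
    rw [hfun] at this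
    exact this
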